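/- For every integer n ≥ 1, every p ∈ [0,1], every υ_0, …, υ_{n−1} ∈ (0,1) (with the convention υ_n = 1), and all real u_0, u_1, …, u_n ∈ [0,1), the generating function of the likelihood satisfies Σ_{x_0 ≥ 1} Σ_{(y_1,…,y_n) ∈ ℕ^n} L(x_0, y_1, …, y_n) u_0^{x_0} u_1^{y_1} ⋯ u_n^{y_n} = Σ_{x_0 ≥ 1, x_1 ≥ 1, …, x_n ≥ 1} (p u_n + q)^{x_n} Π_{i=0}^{n−1} C(x_{i+1} − 1, x_i − 1) w_i^{x_i} υ_i^{x_i} (1 − υ_i)^{x_{i+1} − x_i}, where w_0 = u_0 and w_i = p u_i + q for 1 ≤ i ≤ n−1, both sides being convergent sums of nonnegative terms. -/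

import Mathlib

open scoped BigOperators

noncomputable section

/-- Binomial coefficient `C(m,k)` for integers, with the convention that it is `0`
when `k < 0` or `k > m`. -/
def ichoose (m k : ℤ) : ℝ := if 0 ≤ k ∧ k ≤ m then ((m.toNat).choose k.toNat : ℝ) else 0

/-- The previous population size: `prevx x0 xs i` is `x0` if `i = 0` and `xs (i-1)` otherwise. -/
def prevx (x0 : ℕ) (xs : ℕ → ℕ) (i : ℕ) : ℕ := if i = 0 then x0 else xs (i - 1)

/-- Extension of a tuple `f : Fin n → ℕ` to all of `ℕ`, with default value `d` beyond `n`. -/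
def extFin (n : ℕ) (f : Fin n → ℕ) (d : ℕ) : ℕ → ℕ := fun i => if h : i < n then f ⟨i, h⟩ else d

/-- Extension of a positive tuple of population sizes to all of `ℕ`. -/
def xbar (n : ℕ) (x : Fin n → ℕ+) : ℕ → ℕ := extFin n (fun j => (x j : ℕ)) 1

/-- The summand of the POPBP likelihood: for hidden trajectory `xs = (x_1, …, x_n)`
(indexed here by `i ∈ {0, …, n-1}`, so `xs i = x_{i+1}`), data `y = (y_1, …, y_n)`
(again `y i = y_{i+1}`), initial population `x0`, detection probability `p` and
transition parameters `υ = (υ_0, …, υ_{n-1})`, this is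
`∏_{i=1}^{n} C(x_i, y_i) p^{y_i} q^{x_i - y_i} C(x_i - 1, x_{i-1} - 1) υ_{i-1}^{x_{i-1}} (1-υ_{i-1})^{x_i - x_{i-1}}`. -/
def popbpTerm (n : ℕ) (p : ℝ) (υ : ℕ → ℝ) (x0 : ℕ) (y : ℕ → ℕ) (xs : ℕ → ℕ) : ℝ :=
  ∏ i ∈ Finset.range n,
    (ichoose (xs i) (y i) * p ^ (y i) * (1 - p) ^ (xs i - y i) *
      ichoose ((xs i : ℤ) - 1) ((prevx x0 xs i : ℤ) - 1) *
      υ i ^ (prevx x0 xs i) * (1 - υ i) ^ (xs i - prevx x0 xs i))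

/-- The POPBP likelihood `L(x_0, y_1, …, y_n)`: the sum over hidden trajectories
`(x_1, …, x_n) ∈ (ℕ∖{0})^n` of `popbpTerm`. -/
def popbpL (n : ℕ) (p : ℝ) (υ : ℕ → ℝ) (x0 : ℕ) (y : Fin n → ℕ) : ℝ :=
  ∑' x : Fin n → ℕ+, popbpTerm n p υ x0 (extFin n y 0) (xbar n x)

section aux
open ENNReal




lemma tsum_choose_ennreal (N : ℕ) (A B : ℝ≥0∞) :
    ∑' k : ℕ, (N.choose k : ℝ≥0∞) * A ^ k * B ^ (N - k) = (A + B) ^ N := by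
  rw [tsum_eq_sum (s := Finset.range (N + 1)) (by
    intro k hk
    have : N < k := by simpa [Nat.lt_succ_iff] using hk
    simp [Nat.choose_eq_zero_of_lt this])]
  rw [add_pow]
  exact Finset.sum_congr rfl (by intro k _; ring)

lemma tsum_pnat_choose (m : ℕ+) (A B r : ℝ≥0∞) :
    ∑' k : ℕ+, ((((m : ℕ) - 1).choose ((k : ℕ) - 1) : ℝ≥0∞) * A ^ (k : ℕ) *
        B ^ ((m : ℕ) - (k : ℕ)) * r ^ ((k : ℕ) - 1))
      = A * (A * r + B) ^ ((m : ℕ) - 1) := by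
  rw [← Equiv.pnatEquivNat.symm.tsum_eq]
  have h1 : ∀ j : ℕ, ((Equiv.pnatEquivNat.symm j : ℕ+) : ℕ) = j + 1 := fun j => rfl
  have : ∀ j : ℕ, (((m : ℕ) - 1).choose ((Equiv.pnatEquivNat.symm j : ℕ+) - 1 : ℕ) : ℝ≥0∞) *
        A ^ ((Equiv.pnatEquivNat.symm j : ℕ+) : ℕ) *
        B ^ ((m : ℕ) - ((Equiv.pnatEquivNat.symm j : ℕ+) : ℕ)) *
        r ^ (((Equiv.pnatEquivNat.symm j : ℕ+) : ℕ) - 1)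
      = A * ((((m : ℕ) - 1).choose j : ℝ≥0∞) * (A * r) ^ j * B ^ (((m : ℕ) - 1) - j)) := by
    intro j
    rw [h1]
    simp only [Nat.add_sub_cancel]
    have hsub : (m : ℕ) - (j + 1) = ((m : ℕ) - 1) - j := by omega
    rw [hsub, pow_succ, mul_pow]
    ring
  rw [tsum_congr this, ENNReal.tsum_mul_left, tsum_choose_ennreal]

lemma tsum_pi_prod : ∀ {n : ℕ} (g : Fin n → ℕ → ℝ≥0∞),
    ∑' y : Fin n → ℕ, ∏ j, g j (y j) = ∏ j, ∑' k, g j k := by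
  intro n
  induction n with
  | zero =>
    intro g
    rw [tsum_eq_single (fun i => i.elim0) (by intro b hb; exact absurd (Subsingleton.elim b _) hb)]
    simp
  | succ n ih =>
    intro g
    rw [← (Fin.consEquiv (fun _ : Fin (n + 1) => ℕ)).tsum_eq]
    have : ∀ q : ℕ × (Fin n → ℕ),
        (∏ j, g j ((Fin.consEquiv (fun _ => ℕ)) q j))
          = g 0 q.1 * ∏ j : Fin n, g j.succ (q.2 j) := by
      rintro ⟨a, t⟩
      rw [Fin.prod_univ_succ]
      simp [Fin.consEquiv]
    rw [tsum_congr this, ENNReal.tsum_prod']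
    simp_rw [ENNReal.tsum_mul_left, ENNReal.tsum_mul_right]
    rw [Fin.prod_univ_succ, ih]


/-- chain with free variables x_0..x_{n-1} and top value m at index n -/
def Xtop (n : ℕ) (x : Fin n → ℕ+) (m : ℕ+) (i : ℕ) : ℕ :=
  if h : i < n then (x ⟨i, h⟩ : ℕ) else (m : ℕ)

def Rch (A B : ℕ → ℝ≥0∞) : ℕ → ℝ≥0∞
  | 0 => 1
  | j + 1 => A j * Rch A B j + B j

lemma chain_tsum (A B : ℕ → ℝ≥0∞) : ∀ (n : ℕ) (m : ℕ+),
    ∑' x : Fin n → ℕ+, ∏ i ∈ Finset.range n,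
      (((Xtop n x m (i + 1) - 1).choose (Xtop n x m i - 1) : ℝ≥0∞) *
        A i ^ Xtop n x m i * B i ^ (Xtop n x m (i + 1) - Xtop n x m i))
    = (∏ i ∈ Finset.range n, A i) * (Rch A B n) ^ ((m : ℕ) - 1) := by
  intro n
  induction n with
  | zero =>
    intro m
    rw [tsum_eq_single (fun i => i.elim0) (by intro b hb; exact absurd (Subsingleton.elim b _) hb)]
    simp [Rch]
  | succ n ih =>
    intro m
    rw [← (Fin.snocEquiv (fun _ : Fin (n + 1) => ℕ+)).tsum_eq]
    have key : ∀ q : ℕ+ × (Fin n → ℕ+),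
        (∏ i ∈ Finset.range (n + 1),
          (((Xtop (n + 1) (Fin.snocEquiv (fun _ => ℕ+) q) m (i + 1) - 1).choose
              (Xtop (n + 1) (Fin.snocEquiv (fun _ => ℕ+) q) m i - 1) : ℝ≥0∞) *
            A i ^ Xtop (n + 1) (Fin.snocEquiv (fun _ => ℕ+) q) m i *
            B i ^ (Xtop (n + 1) (Fin.snocEquiv (fun _ => ℕ+) q) m (i + 1) -
              Xtop (n + 1) (Fin.snocEquiv (fun _ => ℕ+) q) m i)))
        = (∏ i ∈ Finset.range n,
            (((Xtop n q.2 q.1 (i + 1) - 1).choose (Xtop n q.2 q.1 i - 1) : ℝ≥0∞) *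
              A i ^ Xtop n q.2 q.1 i * B i ^ (Xtop n q.2 q.1 (i + 1) - Xtop n q.2 q.1 i))) *
          ((((m : ℕ) - 1).choose ((q.1 : ℕ) - 1) : ℝ≥0∞) * A n ^ (q.1 : ℕ) *
            B n ^ ((m : ℕ) - (q.1 : ℕ))) := by
      rintro ⟨k, t⟩
      have hfun : (Fin.snocEquiv (fun _ => ℕ+) (k, t)) = Fin.snoc t k := rfl
      have hX : ∀ i ≤ n, Xtop (n + 1) (Fin.snocEquiv (fun _ => ℕ+) (k, t)) m i = Xtop n t k i := by
        intro i hi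
        rcases lt_or_eq_of_le hi with h | h
        · have h1 : i < n + 1 := by omega
          have e1 : (⟨i, h1⟩ : Fin (n + 1)) = Fin.castSucc ⟨i, h⟩ := rfl
          simp only [Xtop, dif_pos h, dif_pos h1, hfun, e1, Fin.snoc_castSucc]
        · have h1 : i < n + 1 := by omega
          have e1 : (⟨i, h1⟩ : Fin (n + 1)) = Fin.last n := Fin.ext (by simp [h])
          have h2 : ¬ i < n := by omega
          simp only [Xtop, dif_pos h1, dif_neg h2, hfun, e1, Fin.snoc_last]
      have hXn1 : Xtop (n + 1) (Fin.snocEquiv (fun _ => ℕ+) (k, t)) m (n + 1) = (m : ℕ) := by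
        simp [Xtop]
      rw [Finset.prod_range_succ]
      congr 1
      · exact Finset.prod_congr rfl (by
          intro i hi
          have hi' : i < n := Finset.mem_range.mp hi
          rw [hX i (le_of_lt hi'), hX (i + 1) hi'])
      · rw [hXn1, hX n le_rfl]
        have : Xtop n t k n = (k : ℕ) := by simp [Xtop]
        rw [this]
    rw [tsum_congr key, ENNReal.tsum_prod']
    have inner : ∀ k : ℕ+,
        (∑' t : Fin n → ℕ+,
          (∏ i ∈ Finset.range n,
            (((Xtop n t k (i + 1) - 1).choose (Xtop n t k i - 1) : ℝ≥0∞) *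
              A i ^ Xtop n t k i * B i ^ (Xtop n t k (i + 1) - Xtop n t k i))) *
          ((((m : ℕ) - 1).choose ((k : ℕ) - 1) : ℝ≥0∞) * A n ^ (k : ℕ) *
            B n ^ ((m : ℕ) - (k : ℕ))))
        = (∏ i ∈ Finset.range n, A i) *
            ((((m : ℕ) - 1).choose ((k : ℕ) - 1) : ℝ≥0∞) * A n ^ (k : ℕ) *
              B n ^ ((m : ℕ) - (k : ℕ)) * (Rch A B n) ^ ((k : ℕ) - 1)) := by
      intro k
      rw [ENNReal.tsum_mul_right, ih k]
      ring
    rw [tsum_congr inner, ENNReal.tsum_mul_left, tsum_pnat_choose m (A n) (B n) (Rch A B n),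
      Finset.prod_range_succ, Rch]
    ring

lemma ichoose_nonneg (m k : ℤ) : 0 ≤ ichoose m k := by
  unfold ichoose; split <;> positivity

lemma ofReal_ichoose_nat (a k : ℕ) :
    ENNReal.ofReal (ichoose (a : ℤ) (k : ℤ)) = (a.choose k : ℝ≥0∞) := by
  unfold ichoose
  rcases le_or_gt k a with h | h
  · rw [if_pos ⟨Int.ofNat_nonneg k, by exact_mod_cast h⟩]
    simp [ENNReal.ofReal_natCast]
  · rw [if_neg (by push_neg; intro _; exact_mod_cast h), Nat.choose_eq_zero_of_lt h]
    simp

lemma ichoose_pred (a b : ℕ) (ha : 1 ≤ a) (hb : 1 ≤ b) :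
    ichoose ((a : ℤ) - 1) ((b : ℤ) - 1) = ((a - 1).choose (b - 1) : ℝ) := by
  unfold ichoose
  have h1 : ((a : ℤ) - 1).toNat = a - 1 := by omega
  have h2 : ((b : ℤ) - 1).toNat = b - 1 := by omega
  rcases le_or_gt b a with h | h
  · rw [if_pos ⟨by omega, by omega⟩, h1, h2]
  · rw [if_neg (by omega), Nat.choose_eq_zero_of_lt (by omega)]
    simp

lemma xbar_cons_prevx (n : ℕ) (x0 : ℕ+) (x : Fin n → ℕ+) (i : ℕ) :
    prevx (x0 : ℕ) (xbar n x) i = xbar (n + 1) (Fin.cons x0 x) i := by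
  unfold prevx xbar extFin
  rcases Nat.eq_zero_or_pos i with rfl | hi
  · simp
  · rw [if_neg (by omega)]
    rcases lt_or_ge i (n + 1) with h | h
    · rw [dif_pos h, dif_pos (by omega : i - 1 < n)]
      have : (⟨i, h⟩ : Fin (n + 1)) = Fin.succ ⟨i - 1, by omega⟩ := Fin.ext (by simp; omega)
      rw [this]; simp only [Fin.cons_succ]
    · rw [dif_neg (by omega), dif_neg (by omega)]

lemma xbar_cons_succ (n : ℕ) (x0 : ℕ+) (x : Fin n → ℕ+) (i : ℕ) :
    xbar n x i = xbar (n + 1) (Fin.cons x0 x) (i + 1) := by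
  unfold xbar extFin
  rcases lt_or_ge i n with h | h
  · rw [dif_pos h, dif_pos (by omega : i + 1 < n + 1)]
    have : (⟨i + 1, by omega⟩ : Fin (n + 1)) = Fin.succ ⟨i, h⟩ := rfl
    rw [this]; simp only [Fin.cons_succ]
  · rw [dif_neg (by omega), dif_neg (by omega)]

lemma xbar_cons_zero (n : ℕ) (x0 : ℕ+) (x : Fin n → ℕ+) :
    xbar (n + 1) (Fin.cons x0 x) 0 = (x0 : ℕ) := by
  unfold xbar extFin
  rw [dif_pos (by omega : 0 < n + 1)]
  rfl

lemma xbar_snoc (n : ℕ) (t : Fin n → ℕ+) (m : ℕ+) (i : ℕ) (hi : i ≤ n) :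
    xbar (n + 1) (Fin.snoc t m) i = Xtop n t m i := by
  unfold xbar extFin Xtop
  rcases lt_or_eq_of_le hi with h | h
  · rw [dif_pos (by omega : i < n + 1), dif_pos h]
    have : (⟨i, by omega⟩ : Fin (n + 1)) = Fin.castSucc ⟨i, h⟩ := rfl
    rw [this]; simp only [Fin.snoc_castSucc]
  · rw [dif_pos (by omega : i < n + 1), dif_neg (by omega)]
    have : (⟨i, by omega⟩ : Fin (n + 1)) = Fin.last n := Fin.ext (by simp [h])
    rw [this]; simp only [Fin.snoc_last]

lemma extFin_coe (n : ℕ) (y : Fin n → ℕ) (d : ℕ) (j : Fin n) : extFin n y d (j : ℕ) = y j := by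
  unfold extFin; rw [dif_pos j.isLt]

lemma xbar_pos (N : ℕ) (xx : Fin N → ℕ+) (i : ℕ) : 1 ≤ xbar N xx i := by
  unfold xbar extFin; split
  · exact (xx _).one_le
  · exact le_refl 1

lemma telescope (m : ℕ) (c : ℝ) (S : ℕ → ℝ) (X : ℕ → ℕ) :
    c ^ X 0 * ∏ i ∈ Finset.range (m + 1), S (i + 1) ^ X (i + 1)
      = S (m + 1) ^ X (m + 1) * ∏ i ∈ Finset.range (m + 1), (if i = 0 then c else S i) ^ X i := by
  rw [Finset.prod_range_succ, Finset.prod_range_succ' (fun i => (if i = 0 then c else S i) ^ X i)]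
  have h1 : ∀ i : ℕ, (if i + 1 = 0 then c else S (i + 1)) ^ X (i + 1) = S (i + 1) ^ X (i + 1) :=
    fun i => by rw [if_neg (by omega)]
  simp only [h1, if_pos rfl, if_true]
  ring

def rhsReal (n : ℕ) (p : ℝ) (υ u : ℕ → ℝ) (x : Fin (n + 1) → ℕ+) : ℝ :=
  (p * u n + (1 - p)) ^ (xbar (n + 1) x n) *
    ∏ i ∈ Finset.range n,
      (ichoose ((xbar (n + 1) x (i + 1) : ℤ) - 1) ((xbar (n + 1) x i : ℤ) - 1) *
        (if i = 0 then u 0 else p * u i + (1 - p)) ^ (xbar (n + 1) x i) *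
        υ i ^ (xbar (n + 1) x i) * (1 - υ i) ^ (xbar (n + 1) x (i + 1) - xbar (n + 1) x i))

section slice

variable {n : ℕ} {p : ℝ} {υ u : ℕ → ℝ}

lemma slice_eq (hn : 1 ≤ n) (hp : p ∈ Set.Icc (0 : ℝ) 1)
    (hυ : ∀ i < n, υ i ∈ Set.Ioo (0 : ℝ) 1) (hu : ∀ i ≤ n, u i ∈ Set.Ico (0 : ℝ) 1)
    (x0 : ℕ+) (x : Fin n → ℕ+) :
    ∑' y : Fin n → ℕ,
      ENNReal.ofReal (popbpTerm n p υ (x0 : ℕ) (extFin n y 0) (xbar n x) *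
        u 0 ^ (x0 : ℕ) * ∏ i : Fin n, u ((i : ℕ) + 1) ^ (y i))
    = ENNReal.ofReal (rhsReal n p υ u (Fin.cons x0 x)) := by
  obtain ⟨hp0, hp1⟩ := hp
  set X : ℕ → ℕ := xbar (n + 1) (Fin.cons x0 x) with hXdef
  have hX0 : X 0 = (x0 : ℕ) := xbar_cons_zero n x0 x
  have hprev : ∀ i, prevx (x0 : ℕ) (xbar n x) i = X i := xbar_cons_prevx n x0 x
  have hxb : ∀ i, xbar n x i = X (i + 1) := xbar_cons_succ n x0 x
  set Dr : ℕ → ℝ := fun j =>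
    ichoose ((X (j + 1) : ℤ) - 1) ((X j : ℤ) - 1) * υ j ^ (X j) *
      (1 - υ j) ^ (X (j + 1) - X j) with hDr
  set gR : ℕ → ℕ → ℝ := fun j k =>
    ichoose (X (j + 1)) k * (p * u (j + 1)) ^ k * (1 - p) ^ (X (j + 1) - k) * Dr j with hgR
  have hDrdef : ∀ j, Dr j = ichoose ((X (j + 1) : ℤ) - 1) ((X j : ℤ) - 1) * υ j ^ (X j) *
      (1 - υ j) ^ (X (j + 1) - X j) := fun j => rfl
  have hgRdef : ∀ j k, gR j k = ichoose (X (j + 1)) k * (p * u (j + 1)) ^ k *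
      (1 - p) ^ (X (j + 1) - k) * Dr j := fun j k => rfl
  have hu_nonneg : ∀ i, i ≤ n → 0 ≤ u i := fun i hi => (hu i hi).1
  have hq : (0:ℝ) ≤ 1 - p := by linarith
  have hpu : ∀ i, 1 ≤ i → i ≤ n → 0 ≤ p * u i := fun i h1 h2 =>
    mul_nonneg hp0 (hu_nonneg i h2)
  have hDr_nonneg : ∀ j, j < n → 0 ≤ Dr j := by
    intro j hj
    obtain ⟨h1, h2⟩ := hυ j hj
    rw [hDrdef]
    exact mul_nonneg (mul_nonneg (ichoose_nonneg _ _) (pow_nonneg (le_of_lt h1) _))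
      (pow_nonneg (by linarith) _)
  have hgR_nonneg : ∀ j, j < n → ∀ k, 0 ≤ gR j k := by
    intro j hj k
    rw [hgRdef]
    exact mul_nonneg (mul_nonneg (mul_nonneg (ichoose_nonneg _ _)
      (pow_nonneg (hpu (j+1) (by omega) (by omega)) _)) (pow_nonneg hq _)) (hDr_nonneg j hj)
  have real_eq : ∀ y : Fin n → ℕ,
      popbpTerm n p υ (x0 : ℕ) (extFin n y 0) (xbar n x) *
          u 0 ^ (x0 : ℕ) * ∏ i : Fin n, u ((i : ℕ) + 1) ^ (y i)
        = (∏ j : Fin n, gR (j : ℕ) (y j)) * u 0 ^ (x0 : ℕ) := by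
    intro y
    unfold popbpTerm
    rw [← Fin.prod_univ_eq_prod_range (fun i =>
      ichoose (xbar n x i) (extFin n y 0 i) * p ^ (extFin n y 0 i) *
        (1 - p) ^ (xbar n x i - extFin n y 0 i) *
        ichoose ((xbar n x i : ℤ) - 1) ((prevx (x0 : ℕ) (xbar n x) i : ℤ) - 1) *
        υ i ^ (prevx (x0 : ℕ) (xbar n x) i) *
        (1 - υ i) ^ (xbar n x i - prevx (x0 : ℕ) (xbar n x) i)) n]
    rw [mul_right_comm, ← Finset.prod_mul_distrib]
    congr 1
    refine Finset.prod_congr rfl ?_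
    intro j _
    rw [extFin_coe n y 0 j, hxb, hprev, hgRdef, hDrdef, mul_pow]
    ring
  have hu0pow : (0:ℝ) ≤ u 0 ^ (x0 : ℕ) := pow_nonneg (hu_nonneg 0 (by omega)) _
  calc
    ∑' y : Fin n → ℕ,
        ENNReal.ofReal (popbpTerm n p υ (x0 : ℕ) (extFin n y 0) (xbar n x) *
          u 0 ^ (x0 : ℕ) * ∏ i : Fin n, u ((i : ℕ) + 1) ^ (y i))
      = ∑' y : Fin n → ℕ,
          (∏ j : Fin n, ENNReal.ofReal (gR (j : ℕ) (y j))) * ENNReal.ofReal (u 0 ^ (x0 : ℕ)) := by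
        refine tsum_congr fun y => ?_
        have hfac2 : ∀ j : Fin n, 0 ≤ gR (j : ℕ) (y j) := fun j => hgR_nonneg (j : ℕ) j.isLt (y j)
        rw [real_eq y, ENNReal.ofReal_mul (Finset.prod_nonneg fun j _ => hfac2 j),
          ENNReal.ofReal_prod_of_nonneg fun j _ => hfac2 j]
    _ = (∏ j : Fin n, ∑' k : ℕ, ENNReal.ofReal (gR (j : ℕ) k)) * ENNReal.ofReal (u 0 ^ (x0 : ℕ)) := by
        rw [ENNReal.tsum_mul_right, tsum_pi_prod (fun j k => ENNReal.ofReal (gR (j : ℕ) k))]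
    _ = (∏ j : Fin n, ENNReal.ofReal (Dr (j : ℕ) * (p * u ((j : ℕ) + 1) + (1 - p)) ^ X ((j : ℕ) + 1))) *
          ENNReal.ofReal (u 0 ^ (x0 : ℕ)) := by
        congr 1
        refine Finset.prod_congr rfl fun j _ => ?_
        have hj := j.isLt
        have h3 : 0 ≤ p * u ((j : ℕ) + 1) := hpu _ (by omega) (by omega)
        have step : ∀ k : ℕ, ENNReal.ofReal (gR (j : ℕ) k)
            = ((X ((j : ℕ) + 1)).choose k : ℝ≥0∞) * ENNReal.ofReal (p * u ((j : ℕ) + 1)) ^ k *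
              ENNReal.ofReal (1 - p) ^ (X ((j : ℕ) + 1) - k) * ENNReal.ofReal (Dr (j : ℕ)) := by
          intro k
          rw [hgRdef,
            ENNReal.ofReal_mul (mul_nonneg (mul_nonneg (ichoose_nonneg _ _) (by positivity))
              (pow_nonneg hq _)),
            ENNReal.ofReal_mul (mul_nonneg (ichoose_nonneg _ _) (by positivity)),
            ENNReal.ofReal_mul (ichoose_nonneg _ _), ofReal_ichoose_nat,
            ENNReal.ofReal_pow h3, ENNReal.ofReal_pow hq]
        rw [tsum_congr step, ENNReal.tsum_mul_right, tsum_choose_ennreal,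
          ← ENNReal.ofReal_add h3 hq, ← ENNReal.ofReal_pow (by positivity),
          mul_comm (ENNReal.ofReal ((p * u ((j : ℕ) + 1) + (1 - p)) ^ X ((j : ℕ) + 1)))
            (ENNReal.ofReal (Dr (j : ℕ))),
          ← ENNReal.ofReal_mul (hDr_nonneg (j : ℕ) hj)]
    _ = ENNReal.ofReal ((∏ j : Fin n, Dr (j : ℕ) * (p * u ((j : ℕ) + 1) + (1 - p)) ^ X ((j : ℕ) + 1)) *
          u 0 ^ (x0 : ℕ)) := by
        have hfac : ∀ j : Fin n, 0 ≤ Dr (j : ℕ) * (p * u ((j : ℕ) + 1) + (1 - p)) ^ X ((j : ℕ) + 1) := by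
          intro j
          have h3 : 0 ≤ p * u ((j : ℕ) + 1) := hpu _ (by omega) (by omega)
          exact mul_nonneg (hDr_nonneg (j : ℕ) j.isLt) (by positivity)
        rw [ENNReal.ofReal_mul (Finset.prod_nonneg fun j _ => hfac j),
          ENNReal.ofReal_prod_of_nonneg fun j _ => hfac j]
    _ = ENNReal.ofReal (rhsReal n p υ u (Fin.cons x0 x)) := by
        congr 1
        unfold rhsReal
        rw [← hXdef]
        obtain ⟨m, rfl⟩ : ∃ m, n = m + 1 := ⟨n - 1, by omega⟩
        rw [Fin.prod_univ_eq_prod_range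
          (fun j => Dr j * (p * u (j + 1) + (1 - p)) ^ X (j + 1)) (m + 1)]
        have hR : ∏ i ∈ Finset.range (m + 1),
            (ichoose ((X (i + 1) : ℤ) - 1) ((X i : ℤ) - 1) *
              (if i = 0 then u 0 else p * u i + (1 - p)) ^ (X i) *
              υ i ^ (X i) * (1 - υ i) ^ (X (i + 1) - X i))
            = (∏ i ∈ Finset.range (m + 1), Dr i) *
              ∏ i ∈ Finset.range (m + 1), (if i = 0 then u 0 else p * u i + (1 - p)) ^ (X i) := by
          rw [← Finset.prod_mul_distrib]
          refine Finset.prod_congr rfl fun i _ => ?_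
          rw [hDrdef]
          ring
        rw [hR, Finset.prod_mul_distrib]
        have htel := telescope m (u 0) (fun t => p * u t + (1 - p)) X
        rw [hX0] at htel
        linear_combination (∏ i ∈ Finset.range (m + 1), Dr i) * htel

end slice

lemma Xtop_pos (n : ℕ) (t : Fin n → ℕ+) (m : ℕ+) (i : ℕ) : 1 ≤ Xtop n t m i := by
  unfold Xtop; split
  · exact (t _).one_le
  · exact m.one_le

section fin

variable {n : ℕ} {p : ℝ} {υ u : ℕ → ℝ}

lemma Rch_lt_one (hn : 1 ≤ n) (hp : p ∈ Set.Icc (0 : ℝ) 1)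
    (hυ : ∀ i < n, υ i ∈ Set.Ioo (0 : ℝ) 1) (hu : ∀ i ≤ n, u i ∈ Set.Ico (0 : ℝ) 1) :
    ∀ j, 1 ≤ j → j ≤ n →
      Rch (fun i => ENNReal.ofReal ((if i = 0 then u 0 else p * u i + (1 - p)) * υ i))
        (fun i => ENNReal.ofReal (1 - υ i)) j < 1 := by
  obtain ⟨hp0, hp1⟩ := hp
  set AA : ℕ → ℝ≥0∞ := fun i => ENNReal.ofReal ((if i = 0 then u 0 else p * u i + (1 - p)) * υ i)
  set BB : ℕ → ℝ≥0∞ := fun i => ENNReal.ofReal (1 - υ i)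
  intro j hj1
  induction j with
  | zero => omega
  | succ j ih =>
    intro hjn
    have hRstep : Rch AA BB (j + 1) = AA j * Rch AA BB j + BB j := rfl
    rcases Nat.eq_zero_or_pos j with rfl | hjpos
    · -- base case j + 1 = 1
      obtain ⟨hυ0, hυ1⟩ := hυ 0 (by omega)
      obtain ⟨hu0, hu1⟩ := hu 0 (by omega)
      rw [hRstep]
      have : Rch AA BB 0 = 1 := rfl
      rw [this, mul_one]
      have hAA0 : AA 0 = ENNReal.ofReal (u 0 * υ 0) := by simp [AA]
      rw [hAA0, ← ENNReal.ofReal_add (by positivity) (by linarith)]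
      rw [ENNReal.ofReal_lt_one]
      nlinarith
    · obtain ⟨hυj0, hυj1⟩ := hυ j (by omega)
      obtain ⟨huj0, huj1⟩ := hu j (by omega)
      have hRj := ih (by omega) (by omega)
      rw [hRstep]
      have hAAj : AA j ≤ ENNReal.ofReal (υ j) := by
        have : AA j = ENNReal.ofReal ((p * u j + (1 - p)) * υ j) := by
          simp [AA, Nat.pos_iff_ne_zero.mp hjpos]
        rw [this]
        apply ENNReal.ofReal_le_ofReal
        nlinarith [mul_nonneg (mul_nonneg hp0 hυj0.le) (by linarith : (0:ℝ) ≤ 1 - u j)]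
      calc AA j * Rch AA BB j + BB j
          ≤ ENNReal.ofReal (υ j) * Rch AA BB j + BB j := by
            exact add_le_add_left (mul_le_mul_left hAAj _) _
        _ < ENNReal.ofReal (υ j) * 1 + BB j := by
            refine ENNReal.add_lt_add_right ENNReal.ofReal_ne_top ?_
            exact ENNReal.mul_lt_mul_right (by simp [ENNReal.ofReal_eq_zero]; linarith)
              ENNReal.ofReal_ne_top hRj
        _ = 1 := by
            rw [mul_one]
            show ENNReal.ofReal (υ j) + ENNReal.ofReal (1 - υ j) = 1
            rw [← ENNReal.ofReal_add (by linarith) (by linarith)]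
            norm_num

lemma rhs_pointwise (hn : 1 ≤ n) (hp : p ∈ Set.Icc (0 : ℝ) 1)
    (hυ : ∀ i < n, υ i ∈ Set.Ioo (0 : ℝ) 1) (hu : ∀ i ≤ n, u i ∈ Set.Ico (0 : ℝ) 1)
    (t : Fin n → ℕ+) (k : ℕ+) :
    ENNReal.ofReal (rhsReal n p υ u (Fin.snoc t k))
      = ENNReal.ofReal (p * u n + (1 - p)) ^ (k : ℕ) *
        ∏ i ∈ Finset.range n,
          (((Xtop n t k (i + 1) - 1).choose (Xtop n t k i - 1) : ℝ≥0∞) *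
            (ENNReal.ofReal ((if i = 0 then u 0 else p * u i + (1 - p)) * υ i)) ^ (Xtop n t k i) *
            (ENNReal.ofReal (1 - υ i)) ^ (Xtop n t k (i + 1) - Xtop n t k i)) := by
  obtain ⟨hp0, hp1⟩ := hp
  have hq : (0:ℝ) ≤ 1 - p := by linarith
  have hW : ∀ i < n, 0 ≤ (if i = 0 then u 0 else p * u i + (1 - p)) := by
    intro i hi
    split
    · exact (hu 0 (by omega)).1
    · have := (hu i (by omega)).1
      positivity
  unfold rhsReal
  have hxb : ∀ i ≤ n, xbar (n + 1) (Fin.snoc t k) i = Xtop n t k i := fun i hi => xbar_snoc n t k i hi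
  have hxbn : xbar (n + 1) (Fin.snoc t k) n = (k : ℕ) := by
    rw [hxb n le_rfl]; unfold Xtop; rw [dif_neg (lt_irrefl n)]
  rw [hxbn]
  have hS : (0:ℝ) ≤ p * u n + (1 - p) := by
    have := (hu n le_rfl).1
    positivity
  have hfacR : ∀ i ∈ Finset.range n, (0:ℝ) ≤
      ichoose ((xbar (n + 1) (Fin.snoc t k) (i + 1) : ℤ) - 1) ((xbar (n + 1) (Fin.snoc t k) i : ℤ) - 1) *
        (if i = 0 then u 0 else p * u i + (1 - p)) ^ (xbar (n + 1) (Fin.snoc t k) i) *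
        υ i ^ (xbar (n + 1) (Fin.snoc t k) i) *
        (1 - υ i) ^ (xbar (n + 1) (Fin.snoc t k) (i + 1) - xbar (n + 1) (Fin.snoc t k) i) := by
    intro i hi
    have hi' := Finset.mem_range.mp hi
    obtain ⟨h1, h2⟩ := hυ i hi'
    exact mul_nonneg (mul_nonneg (mul_nonneg (ichoose_nonneg _ _)
      (pow_nonneg (hW i hi') _)) (pow_nonneg (le_of_lt h1) _)) (pow_nonneg (by linarith) _)
  rw [ENNReal.ofReal_mul (by positivity), ENNReal.ofReal_pow hS,
    ENNReal.ofReal_prod_of_nonneg hfacR]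
  congr 1
  refine Finset.prod_congr rfl fun i hi => ?_
  have hi' := Finset.mem_range.mp hi
  obtain ⟨h1, h2⟩ := hυ i hi'
  rw [hxb i (by omega), hxb (i + 1) (by omega)]
  have hpos1 : 1 ≤ Xtop n t k i := Xtop_pos n t k i
  have hpos2 : 1 ≤ Xtop n t k (i + 1) := Xtop_pos n t k (i + 1)
  rw [ENNReal.ofReal_mul (mul_nonneg (mul_nonneg (ichoose_nonneg _ _)
      (pow_nonneg (hW i hi') _)) (pow_nonneg (le_of_lt h1) _)),
    ENNReal.ofReal_mul (mul_nonneg (ichoose_nonneg _ _) (pow_nonneg (hW i hi') _)),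
    ENNReal.ofReal_mul (ichoose_nonneg _ _)]
  rw [ichoose_pred _ _ hpos2 hpos1, ENNReal.ofReal_natCast]
  rw [ENNReal.ofReal_pow (hW i hi'), ENNReal.ofReal_pow (le_of_lt h1),
    ENNReal.ofReal_pow (by linarith : (0:ℝ) ≤ 1 - υ i)]
  rw [ENNReal.ofReal_mul (hW i hi'), mul_pow]
  ring

lemma rhs_fin (hn : 1 ≤ n) (hp : p ∈ Set.Icc (0 : ℝ) 1)
    (hυ : ∀ i < n, υ i ∈ Set.Ioo (0 : ℝ) 1) (hu : ∀ i ≤ n, u i ∈ Set.Ico (0 : ℝ) 1) :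
    ∑' x' : Fin (n + 1) → ℕ+, ENNReal.ofReal (rhsReal n p υ u x') ≠ ⊤ := by
  set AA : ℕ → ℝ≥0∞ := fun i => ENNReal.ofReal ((if i = 0 then u 0 else p * u i + (1 - p)) * υ i)
    with hAA
  set BB : ℕ → ℝ≥0∞ := fun i => ENNReal.ofReal (1 - υ i) with hBB
  set s : ℝ≥0∞ := ENNReal.ofReal (p * u n + (1 - p)) with hs
  rw [← (Fin.snocEquiv (fun _ : Fin (n + 1) => ℕ+)).tsum_eq]
  have hpt : ∀ q : ℕ+ × (Fin n → ℕ+),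
      ENNReal.ofReal (rhsReal n p υ u (Fin.snocEquiv (fun _ => ℕ+) q))
        = s ^ (q.1 : ℕ) * ∏ i ∈ Finset.range n,
            (((Xtop n q.2 q.1 (i + 1) - 1).choose (Xtop n q.2 q.1 i - 1) : ℝ≥0∞) *
              AA i ^ (Xtop n q.2 q.1 i) * BB i ^ (Xtop n q.2 q.1 (i + 1) - Xtop n q.2 q.1 i)) := by
    rintro ⟨k, t⟩
    have : (Fin.snocEquiv (fun _ : Fin (n + 1) => ℕ+)) (k, t) = Fin.snoc t k := rfl
    rw [this]
    exact rhs_pointwise hn hp hυ hu t k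
  rw [tsum_congr hpt, ENNReal.tsum_prod']
  have inner : ∀ k : ℕ+,
      (∑' t : Fin n → ℕ+, s ^ (k : ℕ) * ∏ i ∈ Finset.range n,
        (((Xtop n t k (i + 1) - 1).choose (Xtop n t k i - 1) : ℝ≥0∞) *
          AA i ^ (Xtop n t k i) * BB i ^ (Xtop n t k (i + 1) - Xtop n t k i)))
      = (∏ i ∈ Finset.range n, AA i) * (s ^ (k : ℕ) * (Rch AA BB n) ^ ((k : ℕ) - 1)) := by
    intro k
    rw [ENNReal.tsum_mul_left, chain_tsum AA BB n k]
    ring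
  rw [tsum_congr inner, ENNReal.tsum_mul_left]
  have geom : (∑' k : ℕ+, s ^ (k : ℕ) * (Rch AA BB n) ^ ((k : ℕ) - 1))
      = s * (1 - s * Rch AA BB n)⁻¹ := by
    rw [← Equiv.pnatEquivNat.symm.tsum_eq]
    have : ∀ j : ℕ, s ^ ((Equiv.pnatEquivNat.symm j : ℕ+) : ℕ) *
        (Rch AA BB n) ^ (((Equiv.pnatEquivNat.symm j : ℕ+) : ℕ) - 1)
        = s * (s * Rch AA BB n) ^ j := by
      intro j
      have h1 : ((Equiv.pnatEquivNat.symm j : ℕ+) : ℕ) = j + 1 := rfl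
      rw [h1, Nat.add_sub_cancel, pow_succ, mul_pow]
      ring
    rw [tsum_congr this, ENNReal.tsum_mul_left, ENNReal.tsum_geometric]
  rw [geom]
  have hsR : s * Rch AA BB n < 1 := by
    have hs1 : s ≤ 1 := by
      rw [hs, ENNReal.ofReal_le_one]
      have h1 := (hu n le_rfl).2
      have h0 := (hu n le_rfl).1
      nlinarith [hp.1, hp.2]
    have hR1 : Rch AA BB n < 1 := Rch_lt_one hn hp hυ hu n hn le_rfl
    calc s * Rch AA BB n ≤ 1 * Rch AA BB n := mul_le_mul_left hs1 _
      _ = Rch AA BB n := one_mul _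
      _ < 1 := hR1
  have h1 : (∏ i ∈ Finset.range n, AA i) ≠ ⊤ :=
    (ENNReal.prod_lt_top fun i _ => ENNReal.ofReal_lt_top).ne
  have h2 : s ≠ ⊤ := ENNReal.ofReal_ne_top
  have h3 : (1 - s * Rch AA BB n)⁻¹ ≠ ⊤ := by
    rw [Ne, ENNReal.inv_eq_top, tsub_eq_zero_iff_le]
    exact fun h => absurd (lt_of_lt_of_le hsR h) (lt_irrefl _)
  exact ENNReal.mul_ne_top h1 (ENNReal.mul_ne_top h2 h3)

end fin

lemma summable_of_tsum_ofReal_ne_top {ι : Type*} {f : ι → ℝ} (h0 : ∀ i, 0 ≤ f i)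
    (h : ∑' i, ENNReal.ofReal (f i) ≠ ⊤) : Summable f := by
  have h1 : Summable (fun i => (f i).toNNReal) :=
    ENNReal.tsum_coe_ne_top_iff_summable.mp h
  have h2 := NNReal.summable_coe.mpr h1
  have : (fun i => ((f i).toNNReal : ℝ)) = f := funext fun i => Real.coe_toNNReal _ (h0 i)
  rwa [this] at h2

lemma tsum_eq_tsum_of_ofReal {ι κ : Type*} {f : ι → ℝ} {g : κ → ℝ}
    (h0f : ∀ i, 0 ≤ f i) (h0g : ∀ i, 0 ≤ g i)
    (hfg : ∑' i, ENNReal.ofReal (f i) = ∑' i, ENNReal.ofReal (g i))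
    (hfin : ∑' i, ENNReal.ofReal (f i) ≠ ⊤) :
    ∑' i, f i = ∑' i, g i := by
  have sf := summable_of_tsum_ofReal_ne_top h0f hfin
  have sg := summable_of_tsum_ofReal_ne_top h0g (hfg ▸ hfin)
  have e1 := ENNReal.ofReal_tsum_of_nonneg h0f sf
  have e2 := ENNReal.ofReal_tsum_of_nonneg h0g sg
  exact (ENNReal.ofReal_eq_ofReal_iff (tsum_nonneg h0f) (tsum_nonneg h0g)).mp
    (by rw [e1, e2, hfg])

section final

variable {n : ℕ} {p : ℝ} {υ u : ℕ → ℝ}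

lemma master (hn : 1 ≤ n) (hp : p ∈ Set.Icc (0 : ℝ) 1)
    (hυ : ∀ i < n, υ i ∈ Set.Ioo (0 : ℝ) 1) (hu : ∀ i ≤ n, u i ∈ Set.Ico (0 : ℝ) 1) :
    ∑' z : ℕ+ × (Fin n → ℕ), ∑' x : Fin n → ℕ+,
      ENNReal.ofReal (popbpTerm n p υ (z.1 : ℕ) (extFin n z.2 0) (xbar n x) *
        u 0 ^ (z.1 : ℕ) * ∏ i : Fin n, u ((i : ℕ) + 1) ^ (z.2 i))
    = ∑' x' : Fin (n + 1) → ℕ+, ENNReal.ofReal (rhsReal n p υ u x') := by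
  rw [ENNReal.tsum_prod']
  have step1 : ∀ x0 : ℕ+,
      (∑' y : Fin n → ℕ, ∑' x : Fin n → ℕ+,
        ENNReal.ofReal (popbpTerm n p υ (x0 : ℕ) (extFin n y 0) (xbar n x) *
          u 0 ^ (x0 : ℕ) * ∏ i : Fin n, u ((i : ℕ) + 1) ^ (y i)))
      = ∑' x : Fin n → ℕ+, ENNReal.ofReal (rhsReal n p υ u (Fin.cons x0 x)) := by
    intro x0
    rw [ENNReal.tsum_comm]
    exact tsum_congr fun x => slice_eq hn hp hυ hu x0 x
  rw [tsum_congr step1, ← ENNReal.tsum_prod'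
    (f := fun q : ℕ+ × (Fin n → ℕ+) => ENNReal.ofReal (rhsReal n p υ u (Fin.cons q.1 q.2)))]
  exact (Fin.consEquiv (fun _ : Fin (n + 1) => ℕ+)).tsum_eq
    (fun x' => ENNReal.ofReal (rhsReal n p υ u x'))

lemma popbpTerm_nonneg (hp : p ∈ Set.Icc (0 : ℝ) 1) (hυ : ∀ i < n, υ i ∈ Set.Ioo (0 : ℝ) 1)
    (x0 : ℕ) (y xs : ℕ → ℕ) : 0 ≤ popbpTerm n p υ x0 y xs := by
  unfold popbpTerm
  refine Finset.prod_nonneg fun i hi => ?_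
  obtain ⟨h1, h2⟩ := hυ i (Finset.mem_range.mp hi)
  exact mul_nonneg (mul_nonneg (mul_nonneg (mul_nonneg (mul_nonneg (ichoose_nonneg _ _)
    (pow_nonneg hp.1 _)) (pow_nonneg (by have := hp.2; linarith) _)) (ichoose_nonneg _ _))
    (pow_nonneg h1.le _)) (pow_nonneg (by linarith) _)

lemma popbpL_nonneg (hp : p ∈ Set.Icc (0 : ℝ) 1) (hυ : ∀ i < n, υ i ∈ Set.Ioo (0 : ℝ) 1)
    (x0 : ℕ) (y : Fin n → ℕ) : 0 ≤ popbpL n p υ x0 y :=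
  tsum_nonneg fun x => popbpTerm_nonneg hp hυ x0 _ _

lemma rhsReal_nonneg (hp : p ∈ Set.Icc (0 : ℝ) 1) (hυ : ∀ i < n, υ i ∈ Set.Ioo (0 : ℝ) 1)
    (hu : ∀ i ≤ n, u i ∈ Set.Ico (0 : ℝ) 1) (x : Fin (n + 1) → ℕ+) :
    0 ≤ rhsReal n p υ u x := by
  unfold rhsReal
  have hS : (0:ℝ) ≤ p * u n + (1 - p) := by
    have h1 := (hu n le_rfl).1
    have h2 := hp.2
    nlinarith [mul_nonneg hp.1 h1]
  refine mul_nonneg (pow_nonneg hS _) (Finset.prod_nonneg fun i hi => ?_)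
  obtain ⟨h1, h2⟩ := hυ i (Finset.mem_range.mp hi)
  have hW : 0 ≤ (if i = 0 then u 0 else p * u i + (1 - p)) := by
    split
    · exact (hu 0 (by omega)).1
    · have h3 := (hu i (le_of_lt (Finset.mem_range.mp hi))).1
      have h4 := hp.2
      nlinarith [mul_nonneg hp.1 h3]
  exact mul_nonneg (mul_nonneg (mul_nonneg (ichoose_nonneg _ _) (pow_nonneg hW _))
    (pow_nonneg h1.le _)) (pow_nonneg (by linarith) _)

end final


end aux

/-- After summing over the observed data `y` using the binomial theorem,
the generating function of the POPBP likelihood equals the sum, over hidden trajectories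
`(x_0, x_1, …, x_n) ∈ (ℕ∖{0})^{n+1}`, of
`(p u_n + q)^{x_n} ∏_{i=0}^{n-1} C(x_{i+1} - 1, x_i - 1) w_i^{x_i} υ_i^{x_i} (1 - υ_i)^{x_{i+1} - x_i}`,
where `w_0 = u_0` and `w_i = p u_i + q` for `1 ≤ i ≤ n-1`; both sides are convergent sums of
nonnegative terms. -/
theorem popbp_generating_function_reduction
    (n : ℕ) (hn : 1 ≤ n) (p : ℝ) (hp : p ∈ Set.Icc (0 : ℝ) 1)
    (υ : ℕ → ℝ) (hυ : ∀ i < n, υ i ∈ Set.Ioo (0 : ℝ) 1) (hυn : υ n = 1)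
    (u : ℕ → ℝ) (hu : ∀ i ≤ n, u i ∈ Set.Ico (0 : ℝ) 1) :
    (∀ z : ℕ+ × (Fin n → ℕ),
      0 ≤ popbpL n p υ (z.1 : ℕ) z.2 * u 0 ^ (z.1 : ℕ) * ∏ i : Fin n, u ((i : ℕ) + 1) ^ (z.2 i)) ∧
    (∀ x : Fin (n + 1) → ℕ+,
      0 ≤ (p * u n + (1 - p)) ^ (xbar (n + 1) x n) *
        ∏ i ∈ Finset.range n,
          (ichoose ((xbar (n + 1) x (i + 1) : ℤ) - 1) ((xbar (n + 1) x i : ℤ) - 1) *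
            (if i = 0 then u 0 else p * u i + (1 - p)) ^ (xbar (n + 1) x i) *
            υ i ^ (xbar (n + 1) x i) * (1 - υ i) ^ (xbar (n + 1) x (i + 1) - xbar (n + 1) x i))) ∧
    Summable (fun z : ℕ+ × (Fin n → ℕ) =>
      popbpL n p υ (z.1 : ℕ) z.2 * u 0 ^ (z.1 : ℕ) * ∏ i : Fin n, u ((i : ℕ) + 1) ^ (z.2 i)) ∧
    Summable (fun x : Fin (n + 1) → ℕ+ =>
      (p * u n + (1 - p)) ^ (xbar (n + 1) x n) *
        ∏ i ∈ Finset.range n,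
          (ichoose ((xbar (n + 1) x (i + 1) : ℤ) - 1) ((xbar (n + 1) x i : ℤ) - 1) *
            (if i = 0 then u 0 else p * u i + (1 - p)) ^ (xbar (n + 1) x i) *
            υ i ^ (xbar (n + 1) x i) * (1 - υ i) ^ (xbar (n + 1) x (i + 1) - xbar (n + 1) x i))) ∧
    (∑' z : ℕ+ × (Fin n → ℕ),
        popbpL n p υ (z.1 : ℕ) z.2 * u 0 ^ (z.1 : ℕ) * ∏ i : Fin n, u ((i : ℕ) + 1) ^ (z.2 i)) =
      ∑' x : Fin (n + 1) → ℕ+,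
        (p * u n + (1 - p)) ^ (xbar (n + 1) x n) *
          ∏ i ∈ Finset.range n,
            (ichoose ((xbar (n + 1) x (i + 1) : ℤ) - 1) ((xbar (n + 1) x i : ℤ) - 1) *
              (if i = 0 then u 0 else p * u i + (1 - p)) ^ (xbar (n + 1) x i) *
              υ i ^ (xbar (n + 1) x i) * (1 - υ i) ^ (xbar (n + 1) x (i + 1) - xbar (n + 1) x i)) := by
  
  have hF0 : ∀ z : ℕ+ × (Fin n → ℕ),
      0 ≤ popbpL n p υ (z.1 : ℕ) z.2 * u 0 ^ (z.1 : ℕ) *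
        ∏ i : Fin n, u ((i : ℕ) + 1) ^ (z.2 i) := by
    intro z
    have ha : (0:ℝ) ≤ u 0 ^ (z.1 : ℕ) := pow_nonneg (hu 0 (by omega)).1 _
    have hb : (0:ℝ) ≤ ∏ i : Fin n, u ((i : ℕ) + 1) ^ (z.2 i) :=
      Finset.prod_nonneg fun i _ => pow_nonneg (hu ((i : ℕ) + 1) i.isLt).1 _
    exact mul_nonneg (mul_nonneg (popbpL_nonneg hp hυ _ _) ha) hb
  have hG0 : ∀ x : Fin (n + 1) → ℕ+, 0 ≤ rhsReal n p υ u x := rhsReal_nonneg hp hυ hu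
  have hT := master hn hp hυ hu
  have hfin := rhs_fin hn hp hυ hu
  have key : ∀ z : ℕ+ × (Fin n → ℕ),
      ENNReal.ofReal (popbpL n p υ (z.1 : ℕ) z.2 * u 0 ^ (z.1 : ℕ) *
          ∏ i : Fin n, u ((i : ℕ) + 1) ^ (z.2 i))
        = ∑' x : Fin n → ℕ+,
            ENNReal.ofReal (popbpTerm n p υ (z.1 : ℕ) (extFin n z.2 0) (xbar n x) *
              u 0 ^ (z.1 : ℕ) * ∏ i : Fin n, u ((i : ℕ) + 1) ^ (z.2 i)) := by
    intro z
    have ha : (0:ℝ) ≤ u 0 ^ (z.1 : ℕ) := pow_nonneg (hu 0 (by omega)).1 _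
    have hb : (0:ℝ) ≤ ∏ i : Fin n, u ((i : ℕ) + 1) ^ (z.2 i) :=
      Finset.prod_nonneg fun i _ => pow_nonneg (hu ((i : ℕ) + 1) i.isLt).1 _
    have hTnn : ∀ x : Fin n → ℕ+,
        0 ≤ popbpTerm n p υ (z.1 : ℕ) (extFin n z.2 0) (xbar n x) :=
      fun x => popbpTerm_nonneg hp hυ _ _ _
    have hsplit : ∀ x : Fin n → ℕ+,
        ENNReal.ofReal (popbpTerm n p υ (z.1 : ℕ) (extFin n z.2 0) (xbar n x) *
            u 0 ^ (z.1 : ℕ) * ∏ i : Fin n, u ((i : ℕ) + 1) ^ (z.2 i))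
          = ENNReal.ofReal (popbpTerm n p υ (z.1 : ℕ) (extFin n z.2 0) (xbar n x)) *
            (ENNReal.ofReal (u 0 ^ (z.1 : ℕ)) *
              ENNReal.ofReal (∏ i : Fin n, u ((i : ℕ) + 1) ^ (z.2 i))) := by
      intro x
      rw [ENNReal.ofReal_mul (mul_nonneg (hTnn x) ha), ENNReal.ofReal_mul (hTnn x), mul_assoc]
    rw [tsum_congr hsplit, ENNReal.tsum_mul_right]
    have hLsplit : ENNReal.ofReal (popbpL n p υ (z.1 : ℕ) z.2 * u 0 ^ (z.1 : ℕ) *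
          ∏ i : Fin n, u ((i : ℕ) + 1) ^ (z.2 i))
        = ENNReal.ofReal (popbpL n p υ (z.1 : ℕ) z.2) *
          (ENNReal.ofReal (u 0 ^ (z.1 : ℕ)) *
            ENNReal.ofReal (∏ i : Fin n, u ((i : ℕ) + 1) ^ (z.2 i))) := by
      rw [ENNReal.ofReal_mul (mul_nonneg (popbpL_nonneg hp hυ _ _) ha),
        ENNReal.ofReal_mul (popbpL_nonneg hp hυ _ _), mul_assoc]
    rw [hLsplit]
    set c := ENNReal.ofReal (u 0 ^ (z.1 : ℕ)) *
      ENNReal.ofReal (∏ i : Fin n, u ((i : ℕ) + 1) ^ (z.2 i)) with hc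
    by_cases hc0 : c = 0
    · rw [hc0, mul_zero, mul_zero]
    · -- the slice is finite
      have hslice : (∑' x : Fin n → ℕ+,
          ENNReal.ofReal (popbpTerm n p υ (z.1 : ℕ) (extFin n z.2 0) (xbar n x) *
            u 0 ^ (z.1 : ℕ) * ∏ i : Fin n, u ((i : ℕ) + 1) ^ (z.2 i))) ≠ ⊤ := by
        refine ne_top_of_le_ne_top (hT ▸ hfin) ?_
        exact ENNReal.le_tsum z
      rw [tsum_congr hsplit, ENNReal.tsum_mul_right] at hslice
      have hne : (∑' x : Fin n → ℕ+,
          ENNReal.ofReal (popbpTerm n p υ (z.1 : ℕ) (extFin n z.2 0) (xbar n x))) ≠ ⊤ := by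
        intro h
        rw [h, ENNReal.top_mul hc0] at hslice
        exact hslice rfl
      have hsum : Summable (fun x : Fin n → ℕ+ =>
          popbpTerm n p υ (z.1 : ℕ) (extFin n z.2 0) (xbar n x)) :=
        summable_of_tsum_ofReal_ne_top hTnn hne
      have hof := ENNReal.ofReal_tsum_of_nonneg hTnn hsum
      have hpop : popbpL n p υ (z.1 : ℕ) z.2
          = ∑' x : Fin n → ℕ+, popbpTerm n p υ (z.1 : ℕ) (extFin n z.2 0) (xbar n x) := rfl
      rw [hpop, hof]
  have hFsum_eq : (∑' z : ℕ+ × (Fin n → ℕ),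
      ENNReal.ofReal (popbpL n p υ (z.1 : ℕ) z.2 * u 0 ^ (z.1 : ℕ) *
        ∏ i : Fin n, u ((i : ℕ) + 1) ^ (z.2 i)))
      = ∑' x' : Fin (n + 1) → ℕ+, ENNReal.ofReal (rhsReal n p υ u x') := by
    rw [tsum_congr key]
    exact hT
  have hFfin : (∑' z : ℕ+ × (Fin n → ℕ),
      ENNReal.ofReal (popbpL n p υ (z.1 : ℕ) z.2 * u 0 ^ (z.1 : ℕ) *
        ∏ i : Fin n, u ((i : ℕ) + 1) ^ (z.2 i))) ≠ ⊤ := by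
    rw [hFsum_eq]; exact hfin
  exact ⟨hF0, hG0, summable_of_tsum_ofReal_ne_top hF0 hFfin,
    summable_of_tsum_ofReal_ne_top hG0 hfin,
    tsum_eq_tsum_of_ofReal hF0 hG0 hFsum_eq hFfin⟩
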